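/- Let N ≥ 1, let Q₀ : ℝ → M_N(ℂ) be continuous, let J ∈ M_N(ℂ), and let λ⁺, λ⁻ ∈ ℂ. Suppose n : ℝ → ℂᴺ and m : ℝ → ℂᴺ are differentiable and satisfy i·n′(x) + (Q₀(x) − λ⁺J)·n(x) = 0 and i·(mᵀ)′(x) − m(x)ᵀ·(Q₀(x) − λ⁻J) = 0 for all x, and that m(x)ᵀ·n(x) ≠ 0 for all x. Then P(x) := (n(x)·m(x)ᵀ)/(m(x)ᵀ·n(x)) satisfies P(x)² = P(x) for all x, and solves the Riccati-type equation i·P′(x) + (Q₀(x) − λ⁺J)·P(x) − P(x)·(Q₀(x) − λ⁻J) + (λ⁺ − λ⁻)·P(x)·J·P(x) = 0 for all x ∈ ℝ. -/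

import Mathlib

open Matrix

/-- The rank-one projector built from polarization vectors `n`, `m`:
`P(x) = (n(x) m(x)ᵀ)/(m(x)ᵀ n(x))`. -/
noncomputable def polProj (N : ℕ) (n m : ℝ → Fin N → ℂ) (x : ℝ) :
    Matrix (Fin N) (Fin N) ℂ :=
  (m x ⬝ᵥ n x)⁻¹ • vecMulVec (n x) (m x)

lemma aux_mul_vecMulVec {N : ℕ} (M : Matrix (Fin N) (Fin N) ℂ) (a b : Fin N → ℂ) :
    M * vecMulVec a b = vecMulVec (M *ᵥ a) b := by
  ext i j
  simp only [mul_apply, vecMulVec_apply, mulVec, dotProduct, Finset.sum_mul]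
  exact Finset.sum_congr rfl fun k _ => by ring

lemma aux_vecMulVec_mul {N : ℕ} (a b : Fin N → ℂ) (M : Matrix (Fin N) (Fin N) ℂ) :
    vecMulVec a b * M = vecMulVec a (b ᵥ* M) := by
  ext i j
  simp only [mul_apply, vecMulVec_apply, vecMul, dotProduct, Finset.mul_sum]
  exact Finset.sum_congr rfl fun k _ => by ring

lemma aux_vecMulVec_mul_vecMulVec {N : ℕ} (a b c d : Fin N → ℂ) :
    vecMulVec a b * vecMulVec c d = (b ⬝ᵥ c) • vecMulVec a d := by
  ext i j
  simp only [mul_apply, vecMulVec_apply, Matrix.smul_apply, smul_eq_mul, dotProduct,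
    Finset.sum_mul]
  exact Finset.sum_congr rfl fun k _ => by ring

/-- If `n` solves `i n′ + (Q₀ − λ⁺J) n = 0`, the row vector `mᵀ` solves
`i (mᵀ)′ − mᵀ (Q₀ − λ⁻J) = 0`, and `mᵀ n` never vanishes, then
`P = (n mᵀ)/(mᵀ n)` is a projector and solves the Riccati-type equation
`i P′ + (Q₀ − λ⁺J) P − P (Q₀ − λ⁻J) + (λ⁺ − λ⁻) P J P = 0`. -/
theorem polarization_projector_riccati (N : ℕ) (hN : 1 ≤ N)
    (Q₀ : ℝ → Matrix (Fin N) (Fin N) ℂ)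
    (hQ₀ : ∀ i j, Continuous fun x => Q₀ x i j)
    (J : Matrix (Fin N) (Fin N) ℂ) (lp lm : ℂ)
    (n m n' m' : ℝ → Fin N → ℂ)
    (hn : ∀ x, HasDerivAt n (n' x) x)
    (hm : ∀ x, HasDerivAt m (m' x) x)
    (heqn : ∀ x, Complex.I • n' x + (Q₀ x - lp • J) *ᵥ n x = 0)
    (heqm : ∀ x, Complex.I • m' x - m x ᵥ* (Q₀ x - lm • J) = 0)
    (hs : ∀ x, m x ⬝ᵥ n x ≠ 0) :
    (∀ x, polProj N n m x * polProj N n m x = polProj N n m x) ∧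
    (∀ x i j, HasDerivAt (fun y => polProj N n m y i j)
      ((Complex.I • ((Q₀ x - lp • J) * polProj N n m x
          - polProj N n m x * (Q₀ x - lm • J)
          + (lp - lm) • (polProj N n m x * J * polProj N n m x))) i j) x) := by
  constructor
  · intro x
    have hsx := hs x
    rw [polProj, smul_mul_assoc, mul_smul_comm, aux_vecMulVec_mul_vecMulVec,
      smul_smul, smul_smul]
    congr 1
    field_simp
  · intro x i j
    have hsx := hs x
    set A := Q₀ x - lp • J with hA
    set B := Q₀ x - lm • J with hB
    have hni := hasDerivAt_pi.mp (hn x)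
    have hmi := hasDerivAt_pi.mp (hm x)
    have hsd : HasDerivAt (fun y => m y ⬝ᵥ n y) (m' x ⬝ᵥ n x + m x ⬝ᵥ n' x) x := by
      simp only [dotProduct]
      rw [← Finset.sum_add_distrib]
      exact HasDerivAt.fun_sum fun k _ => (hmi k).mul (hni k)
    have hfd : HasDerivAt (fun y => n y i * m y j) (n' x i * m x j + n x i * m' x j) x :=
      (hni i).mul (hmi j)
    have hinv : HasDerivAt (fun y => (m y ⬝ᵥ n y)⁻¹)
        ((m' x ⬝ᵥ n x + m x ⬝ᵥ n' x) • (-((m x ⬝ᵥ n x) ^ 2)⁻¹)) x :=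
      (hasDerivAt_inv hsx).scomp x hsd
    have hD : HasDerivAt (fun y => (m y ⬝ᵥ n y)⁻¹ * (n y i * m y j)) _ x := hinv.mul hfd
    have hfun : (fun y => (m y ⬝ᵥ n y)⁻¹ * (n y i * m y j)) = fun y => polProj N n m y i j := by
      funext y
      simp [polProj, vecMulVec_apply]
    rw [hfun] at hD
    have hn' : n' x = Complex.I • (A *ᵥ n x) := by
      have h1 : Complex.I • n' x = -(A *ᵥ n x) := eq_neg_of_add_eq_zero_left (heqn x)
      have := congrArg (fun v => (-Complex.I) • v) h1
      simpa [smul_smul, Complex.I_mul_I] using this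
    have hm' : m' x = (-Complex.I) • (m x ᵥ* B) := by
      have h1 : Complex.I • m' x = m x ᵥ* B := sub_eq_zero.mp (heqm x)
      have := congrArg (fun v => (-Complex.I) • v) h1
      simpa [smul_smul, Complex.I_mul_I] using this
    set s := m x ⬝ᵥ n x with hsdef
    have hs' : m' x ⬝ᵥ n x + m x ⬝ᵥ n' x
        = Complex.I * ((lm - lp) * (m x ⬝ᵥ (J *ᵥ n x))) := by
      rw [hn', hm']
      rw [smul_dotProduct, dotProduct_smul]
      rw [← dotProduct_mulVec]
      rw [hA, hB]
      simp only [Matrix.sub_mulVec, Matrix.smul_mulVec, dotProduct_sub, dotProduct_smul]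
      ring_nf
    -- entry formulas for the target matrix
    have hP : polProj N n m x = s⁻¹ • vecMulVec (n x) (m x) := rfl
    have hAP : (A * polProj N n m x) i j = s⁻¹ * ((A *ᵥ n x) i * m x j) := by
      rw [hP, mul_smul_comm, aux_mul_vecMulVec]
      simp [vecMulVec_apply]
    have hPB : (polProj N n m x * B) i j = s⁻¹ * (n x i * (m x ᵥ* B) j) := by
      rw [hP, smul_mul_assoc, aux_vecMulVec_mul]
      simp [vecMulVec_apply]
    have hPJP : (polProj N n m x * J * polProj N n m x) i j
        = s⁻¹ * s⁻¹ * ((m x ⬝ᵥ (J *ᵥ n x)) * (n x i * m x j)) := by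
      rw [hP, smul_mul_assoc, smul_mul_assoc, mul_smul_comm, aux_vecMulVec_mul,
        aux_vecMulVec_mul_vecMulVec]
      simp only [Matrix.smul_apply, smul_eq_mul, vecMulVec_apply, dotProduct_mulVec]
      ring
    convert hD using 1
    simp only [Matrix.smul_apply, Matrix.add_apply, Matrix.sub_apply, smul_eq_mul, hAP, hPB, hPJP, hs']
    have hnc : n' x i = Complex.I * (A *ᵥ n x) i := by rw [hn']; rfl
    have hmc : m' x j = -Complex.I * (m x ᵥ* B) j := by rw [hm']; rfl
    rw [hnc, hmc]
    field_simp
    ring
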